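/- Suppose the ball of radius d > 0 around μ intersected with the affine hull of M is contained in M. Then the conditional gradient algorithm with step size ρ_t = 1/(t+1) applied to J(g) = ½‖g−μ‖² satisfies ½‖g_t − μ‖² ≤ 2R⁴/(d² t²). -/

import Mathlib

open scoped RealInnerProductSpace

lemma quad_core' (d ρ a h B I : ℝ) (hρ0 : 0 < ρ) (hρ1 : ρ ≤ 1)
    (ha2d : 2 * d ≤ a) (hh0 : 0 ≤ h) (hq1 : (1 - ρ) * h ≤ a * ρ)
    (hB2 : B ^ 2 ≤ a * (2 * d)) (hI : I ≤ -(d * h)) :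
    (1 - ρ) ^ 2 * h ^ 2 + 2 * ((1 - ρ) * ρ) * I + ρ ^ 2 * B ^ 2 ≤ a ^ 2 * ρ ^ 2 := by
  have h1 : 2 * ((1 - ρ) * ρ) * I ≤ 2 * ((1 - ρ) * ρ) * (-(d * h)) := by
    apply mul_le_mul_of_nonneg_left hI; nlinarith
  have h2 : ρ ^ 2 * B ^ 2 ≤ ρ ^ 2 * (a * (2 * d)) :=
    mul_le_mul_of_nonneg_left hB2 (sq_nonneg ρ)
  have h3 : ((1 - ρ) * h - a * ρ) * ((1 - ρ) * h + a * ρ - 2 * ρ * d) ≤ 0 := by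
    apply mul_nonpos_of_nonpos_of_nonneg
    · linarith
    · nlinarith [mul_nonneg hρ0.le (by linarith : (0:ℝ) ≤ a - 2 * d),
        mul_nonneg (by linarith : (0:ℝ) ≤ 1 - ρ) hh0]
  nlinarith [h1, h2, h3]

lemma quad_step' (d R h B I s : ℝ) (hd : 0 < d) (hdR : d ≤ R) (hs : 1 ≤ s)
    (hh0 : 0 ≤ h) (hh : h ≤ 2 * R ^ 2 / (d * s)) (hB0 : 0 ≤ B) (hB : B ≤ 2 * R)
    (hI : I ≤ -(d * h)) :
    (1 - (s + 1)⁻¹) ^ 2 * h ^ 2 + 2 * ((1 - (s + 1)⁻¹) * (s + 1)⁻¹) * I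
      + ((s + 1)⁻¹) ^ 2 * B ^ 2 ≤ (2 * R ^ 2 / (d * (s + 1))) ^ 2 := by
  have hs1 : (0:ℝ) < s + 1 := by linarith
  have hds : (0:ℝ) < d * s := by positivity
  have hρ0 : (0:ℝ) < (s + 1)⁻¹ := by positivity
  have hρs : (s + 1)⁻¹ * (s + 1) = 1 := by field_simp
  have hρ1 : (s + 1)⁻¹ ≤ 1 := by nlinarith [mul_pos hρ0 (by linarith : (0:ℝ) < s)]
  have ha2d : 2 * d ≤ 2 * R ^ 2 / d := by rw [le_div_iff₀ hd]; nlinarith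
  have hsh : s * h ≤ 2 * R ^ 2 / d := by
    rw [le_div_iff₀ hd]
    have := (le_div_iff₀ hds).mp hh
    nlinarith
  have he : 1 - (s + 1)⁻¹ = s * (s + 1)⁻¹ := by field_simp; ring
  have hq1 : (1 - (s + 1)⁻¹) * h ≤ (2 * R ^ 2 / d) * (s + 1)⁻¹ :=
    calc (1 - (s + 1)⁻¹) * h = (s * h) * (s + 1)⁻¹ := by rw [he]; ring
      _ ≤ (2 * R ^ 2 / d) * (s + 1)⁻¹ := mul_le_mul_of_nonneg_right hsh hρ0.le
  have hB2 : B ^ 2 ≤ (2 * R ^ 2 / d) * (2 * d) := by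
    have : (2 * R ^ 2 / d) * (2 * d) = 4 * R ^ 2 := by field_simp; ring
    nlinarith
  have hrhs : (2 * R ^ 2 / (d * (s + 1))) ^ 2 = (2 * R ^ 2 / d) ^ 2 * ((s + 1)⁻¹) ^ 2 := by
    rw [div_mul_eq_div_div, div_eq_mul_inv (2 * R ^ 2 / d), mul_pow]
  rw [hrhs]
  exact quad_core' d _ _ h B I hρ0 hρ1 ha2d hh0 hq1 hB2 hI

/-- `O(1/t²)` convergence of the conditional gradient algorithm with steps
`ρ_t = 1/(t+1)` applied to `J(g) = ½‖g − μ‖²` when the ball of radius `d > 0` around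
`μ` intersected with the affine hull of `M` is contained in `M`:
`½‖g_t − μ‖² ≤ 2R⁴/(d² t²)`. -/
theorem conditional_gradient_rate_one_over_t_squared
    {F : Type*} [NormedAddCommGroup F] [InnerProductSpace ℝ F]
    {X : Type*} (Φ : X → F)
    (M : Set F) (hMconv : Convex ℝ M) (hMcpt : IsCompact M)
    (R : ℝ) (hMR : ∀ g ∈ M, ‖g‖ ≤ R)
    (μ : F) (hμ : μ ∈ M)
    (d : ℝ) (hd : 0 < d)
    (hball : Metric.closedBall μ d ∩ (affineSpan ℝ M : Set F) ⊆ M)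
    (g gbar : ℕ → F)
    (hg1 : g 1 ∈ Set.range Φ) (hg1M : g 1 ∈ M)
    (hmem : ∀ t ≥ 1, gbar (t + 1) ∈ M)
    (hmin : ∀ t ≥ 1, ∀ h ∈ M, ⟪g t - μ, gbar (t + 1)⟫ ≤ ⟪g t - μ, h⟫)
    (hrec : ∀ t ≥ 1,
      g (t + 1) = (1 - ((t : ℝ) + 1)⁻¹) • g t + ((t : ℝ) + 1)⁻¹ • gbar (t + 1)) :
    ∀ t ≥ 1, (1 / 2) * ‖g t - μ‖ ^ 2 ≤ 2 * R ^ 4 / (d ^ 2 * t ^ 2) := by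
  by_cases hdeg : ∀ x ∈ M, x = μ
  · -- degenerate case: M = {μ}, all iterates equal μ
    have hgeq : ∀ t, 1 ≤ t → g t = μ := by
      intro t
      induction t with
      | zero => intro h; omega
      | succ n ih =>
        intro _
        by_cases hn : 1 ≤ n
        · rw [hrec n hn, ih hn, hdeg _ (hmem n hn)]; module
        · have hn0 : n = 0 := by omega
          subst hn0
          exact hdeg _ hg1M
    intro t ht
    rw [hgeq t ht]
    simp only [sub_self, norm_zero]
    have : (1:ℝ) / 2 * 0 ^ 2 = 0 := by ring
    rw [this]
    positivity
  · push_neg at hdeg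
    obtain ⟨p, hpM, hpne⟩ := hdeg
    have hpμ : (0:ℝ) < ‖p - μ‖ := by rwa [norm_pos_iff, sub_ne_zero]
    -- d ≤ R
    have hcpos : (0:ℝ) < d / ‖p - μ‖ := by positivity
    have hcval : d / ‖p - μ‖ * ‖p - μ‖ = d := by field_simp
    have hspan : ∀ c : ℝ, μ + c • (p - μ) ∈ (affineSpan ℝ M : Set F) := by
      intro c
      have := AffineSubspace.smul_vsub_vadd_mem (affineSpan ℝ M) c
        (subset_affineSpan ℝ M hpM) (subset_affineSpan ℝ M hμ) (subset_affineSpan ℝ M hμ)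
      simpa [vsub_eq_sub, vadd_eq_add, add_comm] using this
    have hmem1 : μ + (d / ‖p - μ‖) • (p - μ) ∈ M := by
      apply hball
      refine ⟨?_, hspan _⟩
      rw [Metric.mem_closedBall, dist_eq_norm, add_sub_cancel_left, norm_smul,
        Real.norm_eq_abs, abs_of_pos hcpos, hcval]
    have hmem2 : μ + (-(d / ‖p - μ‖)) • (p - μ) ∈ M := by
      apply hball
      refine ⟨?_, hspan _⟩
      rw [Metric.mem_closedBall, dist_eq_norm, add_sub_cancel_left, norm_smul,
        Real.norm_eq_abs, abs_neg, abs_of_pos hcpos, hcval]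
    have hdR : d ≤ R := by
      have h1 := hMR _ hmem1
      have h2 := hMR _ hmem2
      have he : (μ + (d / ‖p - μ‖) • (p - μ)) - (μ + (-(d / ‖p - μ‖)) • (p - μ))
          = (2 * (d / ‖p - μ‖)) • (p - μ) := by module
      have hnn : ‖(μ + (d / ‖p - μ‖) • (p - μ)) - (μ + (-(d / ‖p - μ‖)) • (p - μ))‖ = 2 * d := by
        rw [he, norm_smul, Real.norm_eq_abs, abs_of_pos (by positivity), mul_assoc, hcval]
      have := norm_sub_le (μ + (d / ‖p - μ‖) • (p - μ)) (μ + (-(d / ‖p - μ‖)) • (p - μ))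
      rw [hnn] at this
      linarith
    have hR0 : (0:ℝ) < R := lt_of_lt_of_le hd hdR
    -- key induction
    have key : ∀ t, 1 ≤ t → g t ∈ M ∧ ‖g t - μ‖ ≤ 2 * R ^ 2 / (d * t) := by
      intro t
      induction t with
      | zero => intro h; omega
      | succ n ih =>
        intro _
        by_cases hn : 1 ≤ n
        · obtain ⟨hgM, hbound⟩ := ih hn
          have hn1 : (1:ℝ) ≤ (n:ℝ) := by exact_mod_cast hn
          have hρ0 : (0:ℝ) < ((n:ℝ) + 1)⁻¹ := by positivity
          have hρ1 : ((n:ℝ) + 1)⁻¹ ≤ 1 := by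
            rw [inv_le_one_iff₀]; right; linarith
          -- membership
          have hgM' : g (n + 1) ∈ M := by
            rw [hrec n hn]
            exact hMconv hgM (hmem n hn) (by linarith) hρ0.le (by ring)
          refine ⟨hgM', ?_⟩
          -- descent inequality
          have hI : ⟪g n - μ, gbar (n + 1) - μ⟫ ≤ -(d * ‖g n - μ‖) := by
            by_cases hz : g n = μ
            · simp [hz]
            · have hh0 : (0:ℝ) < ‖g n - μ‖ := by rwa [norm_pos_iff, sub_ne_zero]
              have hc2 : (0:ℝ) < d / ‖g n - μ‖ := by positivity
              have hwM : μ + (-(d / ‖g n - μ‖)) • (g n - μ) ∈ M := by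
                apply hball
                constructor
                · rw [Metric.mem_closedBall, dist_eq_norm, add_sub_cancel_left, norm_smul,
                    Real.norm_eq_abs, abs_neg, abs_of_pos hc2]
                  rw [div_mul_cancel₀ _ (ne_of_gt hh0)]
                · have := AffineSubspace.smul_vsub_vadd_mem (affineSpan ℝ M) (-(d / ‖g n - μ‖))
                    (subset_affineSpan ℝ M hgM) (subset_affineSpan ℝ M hμ)
                    (subset_affineSpan ℝ M hμ)
                  simpa [vsub_eq_sub, vadd_eq_add, add_comm] using this
              have hle := hmin n hn _ hwM
              have hw : ⟪g n - μ, μ + (-(d / ‖g n - μ‖)) • (g n - μ)⟫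
                  = ⟪g n - μ, μ⟫ - (d / ‖g n - μ‖) * ‖g n - μ‖ ^ 2 := by
                rw [inner_add_right, real_inner_smul_right, real_inner_self_eq_norm_sq]
                ring
              have hdh : d / ‖g n - μ‖ * ‖g n - μ‖ ^ 2 = d * ‖g n - μ‖ := by
                field_simp
              rw [inner_sub_right]
              rw [hw, hdh] at hle
              linarith
          -- norm bound on gbar - μ
          have hBd : ‖gbar (n + 1) - μ‖ ≤ 2 * R := by
            have := norm_sub_le (gbar (n + 1)) μ
            have h1 := hMR _ (hmem n hn)
            have h2 := hMR _ hμ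
            linarith
          -- expansion of the squared norm
          have hsplit : g (n + 1) - μ = (1 - ((n:ℝ) + 1)⁻¹) • (g n - μ)
              + ((n:ℝ) + 1)⁻¹ • (gbar (n + 1) - μ) := by
            rw [hrec n hn]; module
          have hexp : ‖g (n + 1) - μ‖ ^ 2
              = (1 - ((n:ℝ) + 1)⁻¹) ^ 2 * ‖g n - μ‖ ^ 2
                + 2 * ((1 - ((n:ℝ) + 1)⁻¹) * ((n:ℝ) + 1)⁻¹) * ⟪g n - μ, gbar (n + 1) - μ⟫
                + (((n:ℝ) + 1)⁻¹) ^ 2 * ‖gbar (n + 1) - μ‖ ^ 2 := by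
            rw [hsplit, norm_add_sq_real, norm_smul, norm_smul, real_inner_smul_left,
              real_inner_smul_right, Real.norm_eq_abs, Real.norm_eq_abs,
              abs_of_nonneg (by linarith), abs_of_nonneg hρ0.le, mul_pow, mul_pow]
            ring
          have hquad := quad_step' d R ‖g n - μ‖ ‖gbar (n + 1) - μ‖
            ⟪g n - μ, gbar (n + 1) - μ⟫ (n:ℝ) hd hdR hn1 (norm_nonneg _) hbound
            (norm_nonneg _) hBd hI
          have hsq : ‖g (n + 1) - μ‖ ^ 2 ≤ (2 * R ^ 2 / (d * ((n:ℝ) + 1))) ^ 2 := by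
            rw [hexp]; exact hquad
          have hrpos : (0:ℝ) ≤ 2 * R ^ 2 / (d * ((n:ℝ) + 1)) := by positivity
          push_cast
          exact (pow_le_pow_iff_left₀ (norm_nonneg _) hrpos two_ne_zero).mp hsq
        · have hn0 : n = 0 := by omega
          subst hn0
          refine ⟨hg1M, ?_⟩
          have h1 := hMR _ hg1M
          have h2 := hMR _ hμ
          have := norm_sub_le (g 1) μ
          have hb : ‖g 1 - μ‖ ≤ 2 * R := by linarith
          have : 2 * R ≤ 2 * R ^ 2 / (d * ((0:ℕ) + 1 : ℕ)) := by
            push_cast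
            rw [le_div_iff₀ (by linarith)]
            nlinarith
          push_cast at this ⊢
          linarith
    intro t ht
    obtain ⟨-, hb⟩ := key t ht
    have ht1 : (1:ℝ) ≤ (t:ℝ) := by exact_mod_cast ht
    have hrpos : (0:ℝ) ≤ 2 * R ^ 2 / (d * (t:ℝ)) := by positivity
    have hsq : ‖g t - μ‖ ^ 2 ≤ (2 * R ^ 2 / (d * (t:ℝ))) ^ 2 :=
      pow_le_pow_left₀ (norm_nonneg _) hb 2
    have heq : (2 * R ^ 2 / (d * (t:ℝ))) ^ 2 = 4 * R ^ 4 / (d ^ 2 * (t:ℝ) ^ 2) := by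
      rw [div_pow]; congr 1 <;> ring
    rw [heq] at hsq
    have h4 : 4 * R ^ 4 / (d ^ 2 * (t:ℝ) ^ 2) = 2 * (2 * R ^ 4 / (d ^ 2 * (t:ℝ) ^ 2)) := by
      ring
    rw [h4] at hsq
    linarith
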